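/- arXiv:1706.04859 — 4 statements merged into one kernel-verified Lean document; each statement's English description precedes it below -/
import Mathlib

section
/- Let S ⊆ ℝ^d, let Σ ⊂ S be a finite set, and let f : Σ → ℝ and g : Σ → ℝ^d be arbitrary functions. Then there exist N ∈ ℕ, vectors a₁,…,a_N ∈ ℝ^d and real numbers b₁,…,b_N, c₀, c₁,…,c_N such that the single hidden layer ReLU network h(x) = c₀ + Σ_{i=1}^N cᵢ · max(0, ⟨aᵢ, x⟩ + bᵢ) satisfies, for every σ ∈ Σ: h(σ) = f(σ), h is differentiable at σ, and ∇h(σ) = g(σ). -/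
open Filter Topology Finset InnerProductSpace
open scoped RealInnerProductSpace

namespace ReluInterpAux


variable {d : ℕ}

/-- The class of single-hidden-layer ReLU networks with no constant term. -/
def Net (h : EuclideanSpace ℝ (Fin d) → ℝ) : Prop :=
  ∃ (N : ℕ) (a : Fin N → EuclideanSpace ℝ (Fin d)) (b c : Fin N → ℝ),
    h = fun x => ∑ i, c i * max 0 (⟪a i, x⟫ + b i)

lemma net_congr {h h' : EuclideanSpace ℝ (Fin d) → ℝ} (H : Net h) (e : h = h') : Net h' :=
  e ▸ H

lemma net_zero : Net (d := d) (fun _ => 0) :=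
  ⟨0, ![], ![], ![], by funext x; simp⟩

lemma net_unit (a : EuclideanSpace ℝ (Fin d)) (b c : ℝ) :
    Net (fun x => c * max 0 (⟪a, x⟫ + b)) :=
  ⟨1, ![a], ![b], ![c], by funext x; simp⟩

lemma net_add {h₁ h₂ : EuclideanSpace ℝ (Fin d) → ℝ} (H1 : Net h₁) (H2 : Net h₂) :
    Net (fun x => h₁ x + h₂ x) := by
  obtain ⟨N₁, a₁, b₁, c₁, rfl⟩ := H1
  obtain ⟨N₂, a₂, b₂, c₂, rfl⟩ := H2
  refine ⟨N₁ + N₂, Fin.append a₁ a₂, Fin.append b₁ b₂, Fin.append c₁ c₂, ?_⟩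
  funext x
  simp [Fin.sum_univ_add, Fin.append_left, Fin.append_right]

lemma net_sum {ι : Type*} (s : Finset ι) (h : ι → EuclideanSpace ℝ (Fin d) → ℝ)
    (H : ∀ i ∈ s, Net (h i)) : Net (fun x => ∑ i ∈ s, h i x) := by
  classical
  induction s using Finset.induction with
  | empty => simpa using net_zero
  | @insert a s ha ih =>
    have : Net (fun x => h a x + ∑ i ∈ s, h i x) :=
      net_add (H a (mem_insert_self a s)) (ih fun i hi => H i (mem_insert_of_mem hi))
    exact net_congr this (by funext x; rw [Finset.sum_insert ha])




/-- A ramp: 0 for `⟪u,x⟫ ≤ θ₁`, slope `u` in between, constant `θ₂ - θ₁` for `⟪u,x⟫ ≥ θ₂`. -/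
noncomputable def ramp (u : EuclideanSpace ℝ (Fin d)) (θ₁ θ₂ : ℝ) (x : EuclideanSpace ℝ (Fin d)) : ℝ :=
  max 0 (⟪u, x⟫ - θ₁) - max 0 (⟪u, x⟫ - θ₂)

lemma ev_lt (u : EuclideanSpace ℝ (Fin d)) (θ : ℝ) (σ : EuclideanSpace ℝ (Fin d))
    (h : ⟪u, σ⟫ < θ) : ∀ᶠ x in 𝓝 σ, ⟪u, x⟫ < θ :=
  ((Continuous.inner continuous_const continuous_id).continuousAt).eventually_lt
    continuousAt_const h

lemma ev_gt (u : EuclideanSpace ℝ (Fin d)) (θ : ℝ) (σ : EuclideanSpace ℝ (Fin d))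
    (h : θ < ⟪u, σ⟫) : ∀ᶠ x in 𝓝 σ, θ < ⟪u, x⟫ :=
  continuousAt_const.eventually_lt
    ((Continuous.inner continuous_const continuous_id).continuousAt) h

lemma ramp_left {u : EuclideanSpace ℝ (Fin d)} {θ₁ θ₂ : ℝ} {σ : EuclideanSpace ℝ (Fin d)}
    (h : ⟪u, σ⟫ < θ₁) (h12 : θ₁ ≤ θ₂) : ∀ᶠ x in 𝓝 σ, ramp u θ₁ θ₂ x = 0 := by
  filter_upwards [ev_lt u θ₁ σ h] with x hx
  have hx2 : ⟪u, x⟫ < θ₂ := lt_of_lt_of_le hx h12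
  rw [ramp, max_eq_left (sub_nonpos.2 hx.le), max_eq_left (sub_nonpos.2 hx2.le), sub_zero]

lemma ramp_right {u : EuclideanSpace ℝ (Fin d)} {θ₁ θ₂ : ℝ} {σ : EuclideanSpace ℝ (Fin d)}
    (h : θ₂ < ⟪u, σ⟫) (h12 : θ₁ ≤ θ₂) : ∀ᶠ x in 𝓝 σ, ramp u θ₁ θ₂ x = θ₂ - θ₁ := by
  filter_upwards [ev_gt u θ₂ σ h] with x hx
  have hx1 : θ₁ < ⟪u, x⟫ := lt_of_le_of_lt h12 hx
  rw [ramp, max_eq_right (sub_nonneg.2 hx1.le), max_eq_right (sub_nonneg.2 hx.le)]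
  ring

lemma ramp_mid {u : EuclideanSpace ℝ (Fin d)} {θ₁ θ₂ : ℝ} {σ : EuclideanSpace ℝ (Fin d)}
    (h1 : θ₁ < ⟪u, σ⟫) (h2 : ⟪u, σ⟫ < θ₂) :
    ∀ᶠ x in 𝓝 σ, ramp u θ₁ θ₂ x = -θ₁ + ⟪u, x⟫ := by
  filter_upwards [ev_gt u θ₁ σ h1, ev_lt u θ₂ σ h2] with x hx1 hx2
  rw [ramp, max_eq_right (sub_nonneg.2 hx1.le), max_eq_left (sub_nonpos.2 hx2.le)]
  ring

/-- `h` coincides, near `σ`, with the affine function `x ↦ k + ⟪w, x⟫`. -/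
def LocAff (h : EuclideanSpace ℝ (Fin d) → ℝ) (σ w : EuclideanSpace ℝ (Fin d)) : Prop :=
  ∃ k, ∀ᶠ x in 𝓝 σ, h x = k + ⟪w, x⟫

lemma locAff_of_flat {h : EuclideanSpace ℝ (Fin d) → ℝ} {σ : EuclideanSpace ℝ (Fin d)} (k : ℝ)
    (H : ∀ᶠ x in 𝓝 σ, h x = k) : LocAff h σ 0 :=
  ⟨k, by filter_upwards [H] with x hx; simp [hx]⟩

lemma LocAff.add {h₁ h₂ : EuclideanSpace ℝ (Fin d) → ℝ} {σ w₁ w₂ : EuclideanSpace ℝ (Fin d)}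
    (H1 : LocAff h₁ σ w₁) (H2 : LocAff h₂ σ w₂) :
    LocAff (fun x => h₁ x + h₂ x) σ (w₁ + w₂) := by
  obtain ⟨k₁, hk₁⟩ := H1
  obtain ⟨k₂, hk₂⟩ := H2
  refine ⟨k₁ + k₂, ?_⟩
  filter_upwards [hk₁, hk₂] with x h1 h2
  rw [h1, h2, inner_add_left]
  ring

lemma locAff_sum {ι : Type*} (s : Finset ι) (h : ι → EuclideanSpace ℝ (Fin d) → ℝ)
    (w : ι → EuclideanSpace ℝ (Fin d)) (σ : EuclideanSpace ℝ (Fin d))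
    (H : ∀ i ∈ s, LocAff (h i) σ (w i)) :
    LocAff (fun x => ∑ i ∈ s, h i x) σ (∑ i ∈ s, w i) := by
  classical
  choose k hk using H
  set k' : ι → ℝ := fun i => if hi : i ∈ s then k i hi else 0 with hk'
  refine ⟨∑ i ∈ s, k' i, ?_⟩
  have hall : ∀ᶠ x in 𝓝 σ, ∀ i ∈ s, h i x = k' i + ⟪w i, x⟫ := by
    rw [Filter.eventually_all_finset]
    intro i hi
    filter_upwards [hk i hi] with x hx
    simp only [hk', dif_pos hi]
    exact hx
  filter_upwards [hall] with x hx
  rw [sum_inner, ← Finset.sum_add_distrib]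
  exact Finset.sum_congr rfl fun i hi => hx i hi

lemma LocAff.grad {h : EuclideanSpace ℝ (Fin d) → ℝ} {σ w : EuclideanSpace ℝ (Fin d)}
    (H : LocAff h σ w) : DifferentiableAt ℝ h σ ∧ gradient h σ = w := by
  obtain ⟨k, hk⟩ := H
  have haff : HasGradientAt (fun x : EuclideanSpace ℝ (Fin d) => k + ⟪w, x⟫) w σ := by
    rw [hasGradientAt_iff_hasFDerivAt]
    have e : (fun x : EuclideanSpace ℝ (Fin d) => k + ⟪w, x⟫)
        = fun x => k + (toDual ℝ (EuclideanSpace ℝ (Fin d)) w) x := by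
      funext x; rw [toDual_apply_apply]
    rw [e]
    exact (toDual ℝ (EuclideanSpace ℝ (Fin d)) w).hasFDerivAt.const_add k
  have hgr : HasGradientAt h w σ :=
    haff.congr_of_eventuallyEq hk
  exact ⟨hgr.differentiableAt, hgr.gradient⟩




lemma add_mul_ne_zero {a b M : ℝ} (hb : b ≠ 0) (hM : M ≠ -a / b) : a + M * b ≠ 0 := by
  intro h0
  apply hM
  field_simp
  linarith

/-- A direction simultaneously non-orthogonal to finitely many nonzero vectors. -/
lemma exists_sep :
    ∀ T : Finset (EuclideanSpace ℝ (Fin d)), (∀ e ∈ T, e ≠ 0) →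
      ∃ v : EuclideanSpace ℝ (Fin d), ∀ e ∈ T, ⟪v, e⟫ ≠ 0 := by
  intro T
  classical
  induction T using Finset.induction with
  | empty => exact fun _ => ⟨0, by simp⟩
  | @insert e T he ih =>
    intro hT
    obtain ⟨v, hv⟩ := ih fun x hx => hT x (mem_insert_of_mem hx)
    have hene : e ≠ 0 := hT e (mem_insert_self e T)
    obtain ⟨M, hM⟩ := Infinite.exists_notMem_finset
      ((insert e T).image fun e' => -⟪v, e'⟫ / ⟪e, e'⟫)
    refine ⟨v + M • e, ?_⟩
    intro e' he'
    have hinner : ⟪v + M • e, e'⟫ = ⟪v, e'⟫ + M * ⟪e, e'⟫ := by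
      rw [inner_add_left, real_inner_smul_left]
    rw [hinner]
    by_cases hee' : ⟪e, e'⟫ = 0
    · rcases mem_insert.1 he' with rfl | he'2
      · exact absurd (inner_self_eq_zero.1 hee') hene
      · simpa [hee'] using hv e' he'2
    · refine add_mul_ne_zero hee' ?_
      intro hbad
      exact hM (Finset.mem_image.2 ⟨e', he', by rw [hbad]⟩)

/-- A positive lower bound strictly below every element of a finite set of positives. -/
lemma exists_pos_lt (F : Finset ℝ) (hF : ∀ r ∈ F, 0 < r) : ∃ η > 0, ∀ r ∈ F, η < r := by
  rcases F.eq_empty_or_nonempty with rfl | hne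
  · exact ⟨1, one_pos, by simp⟩
  · have hmin : 0 < F.min' hne := hF _ (F.min'_mem hne)
    exact ⟨F.min' hne / 2, half_pos hmin,
      fun r hr => lt_of_lt_of_le (half_lt_self hmin) (F.min'_le r hr)⟩


lemma net_cramp (c : ℝ) (u : EuclideanSpace ℝ (Fin d)) (θ₁ θ₂ : ℝ) :
    Net (fun x => c * ramp u θ₁ θ₂ x) := by
  refine net_congr (net_add (net_unit u (-θ₁) c) (net_unit u (-θ₂) (-c))) ?_
  funext x
  simp only [ramp, sub_eq_add_neg]
  ring

lemma ramp_flat_of_gap {u σ : EuclideanSpace ℝ (Fin d)} {s₀ η : ℝ} (hη : 0 < η)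
    (hgap : η < |⟪u, σ⟫ - s₀|) :
    ∃ k, ∀ᶠ x in 𝓝 σ, ramp u (s₀ - η) (s₀ + η) x = k := by
  rcases lt_or_ge ⟪u, σ⟫ s₀ with h | h
  · have h' : ⟪u, σ⟫ < s₀ - η := by
      rw [abs_of_neg (by linarith)] at hgap; linarith
    exact ⟨0, ramp_left h' (by linarith)⟩
  · have h' : s₀ + η < ⟪u, σ⟫ := by
      rw [abs_of_nonneg (by linarith)] at hgap; linarith
    exact ⟨(s₀ + η) - (s₀ - η), ramp_right h' (by linarith)⟩

/-- The gradient gadget attached to the point `σ`. -/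
noncomputable def Gfun (g : EuclideanSpace ℝ (Fin d) → EuclideanSpace ℝ (Fin d))
    (v : EuclideanSpace ℝ (Fin d)) (Mf ηf : EuclideanSpace ℝ (Fin d) → ℝ) (ε : ℝ)
    (σ x : EuclideanSpace ℝ (Fin d)) : ℝ :=
  ramp (g σ + Mf σ • v) (⟪g σ + Mf σ • v, σ⟫ - ηf σ) (⟪g σ + Mf σ • v, σ⟫ + ηf σ) x
    - Mf σ * ramp v (⟪v, σ⟫ - ε) (⟪v, σ⟫ + ε) x

/-- The value gadget (flat trapezoid) attached to the point `σ`. -/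
noncomputable def Tfun (v : EuclideanSpace ℝ (Fin d)) (ε β : ℝ)
    (σ x : EuclideanSpace ℝ (Fin d)) : ℝ :=
  (β / ε) * (ramp v (⟪v, σ⟫ - 2 * ε) (⟪v, σ⟫ - ε) x
    - ramp v (⟪v, σ⟫ + ε) (⟪v, σ⟫ + 2 * ε) x)

lemma Gfun_net (g : EuclideanSpace ℝ (Fin d) → EuclideanSpace ℝ (Fin d))
    (v : EuclideanSpace ℝ (Fin d)) (Mf ηf : EuclideanSpace ℝ (Fin d) → ℝ) (ε : ℝ)
    (σ : EuclideanSpace ℝ (Fin d)) : Net (Gfun g v Mf ηf ε σ) := by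
  refine net_congr (net_add
    (net_cramp 1 (g σ + Mf σ • v) (⟪g σ + Mf σ • v, σ⟫ - ηf σ) (⟪g σ + Mf σ • v, σ⟫ + ηf σ))
    (net_cramp (-(Mf σ)) v (⟪v, σ⟫ - ε) (⟪v, σ⟫ + ε))) ?_
  funext x
  simp only [Gfun]
  ring

lemma Tfun_net (v : EuclideanSpace ℝ (Fin d)) (ε β : ℝ) (σ : EuclideanSpace ℝ (Fin d)) :
    Net (Tfun v ε β σ) := by
  refine net_congr (net_add
    (net_cramp (β / ε) v (⟪v, σ⟫ - 2 * ε) (⟪v, σ⟫ - ε))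
    (net_cramp (-(β / ε)) v (⟪v, σ⟫ + ε) (⟪v, σ⟫ + 2 * ε))) ?_
  funext x
  simp only [Tfun]
  ring

lemma Gfun_locAff {g : EuclideanSpace ℝ (Fin d) → EuclideanSpace ℝ (Fin d)}
    {v : EuclideanSpace ℝ (Fin d)} {Mf ηf : EuclideanSpace ℝ (Fin d) → ℝ} {ε : ℝ}
    {σ : EuclideanSpace ℝ (Fin d)} (hη : 0 < ηf σ) (hε : 0 < ε) :
    LocAff (Gfun g v Mf ηf ε σ) σ (g σ) := by
  have r1 : ∀ᶠ x in 𝓝 σ, ramp (g σ + Mf σ • v) (⟪g σ + Mf σ • v, σ⟫ - ηf σ)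
      (⟪g σ + Mf σ • v, σ⟫ + ηf σ) x = -(⟪g σ + Mf σ • v, σ⟫ - ηf σ) + ⟪g σ + Mf σ • v, x⟫ :=
    ramp_mid (by linarith) (by linarith)
  have r2 : ∀ᶠ x in 𝓝 σ, ramp v (⟪v, σ⟫ - ε) (⟪v, σ⟫ + ε) x
      = -(⟪v, σ⟫ - ε) + ⟪v, x⟫ := ramp_mid (by linarith) (by linarith)
  refine ⟨-(⟪g σ + Mf σ • v, σ⟫ - ηf σ) - Mf σ * (-(⟪v, σ⟫ - ε)), ?_⟩
  filter_upwards [r1, r2] with x h1 h2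
  simp only [Gfun]
  rw [h1, h2]
  have hx : ⟪g σ + Mf σ • v, x⟫ = ⟪g σ, x⟫ + Mf σ * ⟪v, x⟫ := by
    rw [inner_add_left, real_inner_smul_left]
  rw [hx]
  ring

lemma Gfun_flat {g : EuclideanSpace ℝ (Fin d) → EuclideanSpace ℝ (Fin d)}
    {v : EuclideanSpace ℝ (Fin d)} {Mf ηf : EuclideanSpace ℝ (Fin d) → ℝ} {ε : ℝ}
    {σ τ : EuclideanSpace ℝ (Fin d)} (hη : 0 < ηf σ) (hε : 0 < ε)
    (hgap1 : ηf σ < |⟪g σ + Mf σ • v, τ - σ⟫|) (hgap2 : ε < |⟪v, τ - σ⟫|) :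
    ∃ k, ∀ᶠ x in 𝓝 τ, Gfun g v Mf ηf ε σ x = k := by
  rw [inner_sub_right] at hgap1 hgap2
  obtain ⟨k1, hk1⟩ := ramp_flat_of_gap (σ := τ) hη hgap1
  obtain ⟨k2, hk2⟩ := ramp_flat_of_gap (σ := τ) hε hgap2
  refine ⟨k1 - Mf σ * k2, ?_⟩
  filter_upwards [hk1, hk2] with x h1 h2
  simp only [Gfun]
  rw [h1, h2]

lemma Tfun_self {v : EuclideanSpace ℝ (Fin d)} {ε β : ℝ} {σ : EuclideanSpace ℝ (Fin d)}
    (hε : 0 < ε) : ∀ᶠ x in 𝓝 σ, Tfun v ε β σ x = β := by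
  have r1 : ∀ᶠ x in 𝓝 σ, ramp v (⟪v, σ⟫ - 2 * ε) (⟪v, σ⟫ - ε) x
      = (⟪v, σ⟫ - ε) - (⟪v, σ⟫ - 2 * ε) := ramp_right (by linarith) (by linarith)
  have r2 : ∀ᶠ x in 𝓝 σ, ramp v (⟪v, σ⟫ + ε) (⟪v, σ⟫ + 2 * ε) x = 0 :=
    ramp_left (by linarith) (by linarith)
  filter_upwards [r1, r2] with x h1 h2
  simp only [Tfun]
  rw [h1, h2, show (⟪v, σ⟫ - ε) - (⟪v, σ⟫ - 2 * ε) = ε from by ring, sub_zero,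
    div_mul_cancel₀ _ (ne_of_gt hε)]

lemma Tfun_flat {v : EuclideanSpace ℝ (Fin d)} {ε β : ℝ} {σ τ : EuclideanSpace ℝ (Fin d)}
    (hε : 0 < ε) (hgap : 2 * ε < |⟪v, τ - σ⟫|) : ∀ᶠ x in 𝓝 τ, Tfun v ε β σ x = 0 := by
  rw [inner_sub_right] at hgap
  rcases lt_or_ge ⟪v, τ⟫ ⟪v, σ⟫ with h | h
  · have h' : ⟪v, τ⟫ < ⟪v, σ⟫ - 2 * ε := by
      rw [abs_of_neg (by linarith)] at hgap; linarith
    have r1 : ∀ᶠ x in 𝓝 τ, ramp v (⟪v, σ⟫ - 2 * ε) (⟪v, σ⟫ - ε) x = 0 :=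
      ramp_left h' (by linarith)
    have r2 : ∀ᶠ x in 𝓝 τ, ramp v (⟪v, σ⟫ + ε) (⟪v, σ⟫ + 2 * ε) x = 0 :=
      ramp_left (by linarith) (by linarith)
    filter_upwards [r1, r2] with x h1 h2
    simp only [Tfun]
    rw [h1, h2]
    ring
  · have h' : ⟪v, σ⟫ + 2 * ε < ⟪v, τ⟫ := by
      rw [abs_of_nonneg (by linarith)] at hgap; linarith
    have r1 : ∀ᶠ x in 𝓝 τ, ramp v (⟪v, σ⟫ - 2 * ε) (⟪v, σ⟫ - ε) x
        = (⟪v, σ⟫ - ε) - (⟪v, σ⟫ - 2 * ε) := ramp_right (by linarith) (by linarith)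
    have r2 : ∀ᶠ x in 𝓝 τ, ramp v (⟪v, σ⟫ + ε) (⟪v, σ⟫ + 2 * ε) x
        = (⟪v, σ⟫ + 2 * ε) - (⟪v, σ⟫ + ε) := ramp_right (by linarith) (by linarith)
    filter_upwards [r1, r2] with x h1 h2
    simp only [Tfun]
    rw [h1, h2]
    ring

/-- Main construction: a ReLU network interpolating values and gradients on a finite set. -/
lemma main (Sigma : Finset (EuclideanSpace ℝ (Fin d)))
    (f : EuclideanSpace ℝ (Fin d) → ℝ)
    (g : EuclideanSpace ℝ (Fin d) → EuclideanSpace ℝ (Fin d)) :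
    ∃ h : EuclideanSpace ℝ (Fin d) → ℝ, Net h ∧
      ∀ σ ∈ Sigma, h σ = f σ ∧ DifferentiableAt ℝ h σ ∧ gradient h σ = g σ := by
  classical
  -- a direction separating all pairs of points of `Sigma`
  obtain ⟨v, hv0⟩ := exists_sep
    (((Sigma ×ˢ Sigma).filter fun p => p.1 ≠ p.2).image fun p => p.2 - p.1)
    (by
      intro e he
      obtain ⟨p, hp, rfl⟩ := Finset.mem_image.1 he
      exact sub_ne_zero.2 (Ne.symm (Finset.mem_filter.1 hp).2))
  have hv : ∀ σ ∈ Sigma, ∀ τ ∈ Sigma, τ ≠ σ → ⟪v, τ - σ⟫ ≠ 0 := by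
    intro σ hσ τ hτ hne
    exact hv0 _ (Finset.mem_image.2 ⟨(σ, τ), Finset.mem_filter.2
      ⟨Finset.mem_product.2 ⟨hσ, hτ⟩, Ne.symm hne⟩, rfl⟩)
  -- a width `ε` smaller than half of all separations along `v`
  obtain ⟨ε0, hε00, hε0lt⟩ := exists_pos_lt
    (((Sigma ×ˢ Sigma).filter fun p => p.1 ≠ p.2).image fun p => |⟪v, p.2 - p.1⟫|)
    (by
      intro r hr
      obtain ⟨p, hp, rfl⟩ := Finset.mem_image.1 hr
      have hp' := Finset.mem_filter.1 hp
      exact abs_pos.2 (hv p.1 (Finset.mem_product.1 hp'.1).1 p.2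
        (Finset.mem_product.1 hp'.1).2 (Ne.symm hp'.2)))
  set ε : ℝ := ε0 / 2 with hεdef
  have hε : 0 < ε := half_pos hε00
  have hεlt : ∀ σ ∈ Sigma, ∀ τ ∈ Sigma, τ ≠ σ → 2 * ε < |⟪v, τ - σ⟫| := by
    intro σ hσ τ hτ hne
    have := hε0lt _ (Finset.mem_image.2 ⟨(σ, τ), Finset.mem_filter.2
      ⟨Finset.mem_product.2 ⟨hσ, hτ⟩, Ne.symm hne⟩, rfl⟩)
    rw [hεdef]; linarith
  -- per-point slopes `M σ` and widths `η σ` for the gradient gadgets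
  have hMη : ∀ σ : EuclideanSpace ℝ (Fin d), ∃ M η : ℝ, 0 < η ∧
      (σ ∈ Sigma → ∀ τ ∈ Sigma, τ ≠ σ → η < |⟪g σ + M • v, τ - σ⟫|) := by
    intro σ
    by_cases hσ : σ ∈ Sigma
    · obtain ⟨M, hM⟩ := Infinite.exists_notMem_finset
        (Sigma.image fun τ => -⟪g σ, τ - σ⟫ / ⟪v, τ - σ⟫)
      have hne : ∀ τ ∈ Sigma, τ ≠ σ → ⟪g σ + M • v, τ - σ⟫ ≠ 0 := by
        intro τ hτ hne
        rw [inner_add_left, real_inner_smul_left]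
        exact add_mul_ne_zero (hv σ hσ τ hτ hne)
          fun hbad => hM (Finset.mem_image.2 ⟨τ, hτ, hbad.symm⟩)
      obtain ⟨η, hη, hηlt⟩ := exists_pos_lt
        ((Sigma.erase σ).image fun τ => |⟪g σ + M • v, τ - σ⟫|)
        (by
          intro r hr
          obtain ⟨τ, hτ, rfl⟩ := Finset.mem_image.1 hr
          exact abs_pos.2 (hne τ (Finset.mem_of_mem_erase hτ) (Finset.ne_of_mem_erase hτ)))
      exact ⟨M, η, hη, fun _ τ hτ hneq =>
        hηlt _ (Finset.mem_image.2 ⟨τ, Finset.mem_erase.2 ⟨hneq, hτ⟩, rfl⟩)⟩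
    · exact ⟨0, 1, one_pos, fun h => absurd h hσ⟩
  choose Mf ηf hη0 hsep using hMη
  -- heights of the trapezoids
  set β : EuclideanSpace ℝ (Fin d) → ℝ :=
    fun σ => f σ - ∑ τ ∈ Sigma, Gfun g v Mf ηf ε τ σ with hβdef
  -- the network
  refine ⟨fun x => ∑ σ ∈ Sigma, (Gfun g v Mf ηf ε σ x + Tfun v ε (β σ) σ x), ?_, ?_⟩
  · exact net_sum Sigma _ fun σ _ => net_add (Gfun_net g v Mf ηf ε σ) (Tfun_net v ε (β σ) σ)
  intro σ hσ
  -- differentiability and gradient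
  have hLoc : LocAff (fun x => ∑ τ ∈ Sigma, (Gfun g v Mf ηf ε τ x + Tfun v ε (β τ) τ x))
      σ (g σ) := by
    have e : (fun x => ∑ τ ∈ Sigma, (Gfun g v Mf ηf ε τ x + Tfun v ε (β τ) τ x))
        = fun x => (Gfun g v Mf ηf ε σ x + Tfun v ε (β σ) σ x)
          + ∑ τ ∈ Sigma.erase σ, (Gfun g v Mf ηf ε τ x + Tfun v ε (β τ) τ x) :=
      funext fun x => (Finset.add_sum_erase Sigma
        (fun τ => Gfun g v Mf ηf ε τ x + Tfun v ε (β τ) τ x) hσ).symm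
    rw [e]
    have hown : LocAff (fun x => Gfun g v Mf ηf ε σ x + Tfun v ε (β σ) σ x) σ (g σ) := by
      obtain ⟨k1, h1⟩ := Gfun_locAff (g := g) (v := v) (Mf := Mf) (ηf := ηf) (ε := ε)
        (σ := σ) (hη0 σ) hε
      refine ⟨k1 + β σ, ?_⟩
      filter_upwards [h1, Tfun_self (v := v) (β := β σ) (σ := σ) hε] with x hx1 hx2
      rw [hx1, hx2]
      ring
    have hrest : LocAff (fun x => ∑ τ ∈ Sigma.erase σ,
        (Gfun g v Mf ηf ε τ x + Tfun v ε (β τ) τ x)) σ 0 := by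
      have h0 := locAff_sum (Sigma.erase σ)
        (fun τ x => Gfun g v Mf ηf ε τ x + Tfun v ε (β τ) τ x) (fun _ => 0) σ ?_
      · simpa using h0
      intro τ hτ
      have htS : τ ∈ Sigma := Finset.mem_of_mem_erase hτ
      have hts : τ ≠ σ := Finset.ne_of_mem_erase hτ
      have hστ : σ ≠ τ := hts.symm
      obtain ⟨k1, h1⟩ := Gfun_flat (g := g) (v := v) (Mf := Mf) (ηf := ηf) (ε := ε)
        (σ := τ) (τ := σ) (hη0 τ) hε (hsep τ htS σ hσ hστ)
        (lt_trans (by linarith) (hεlt τ htS σ hσ hστ))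
      refine locAff_of_flat k1 ?_
      filter_upwards [h1, Tfun_flat (β := β τ) hε (hεlt τ htS σ hσ hστ)] with x hx1 hx2
      rw [hx1, hx2, add_zero]
    simpa using hown.add hrest
  -- value
  have hval : (∑ τ ∈ Sigma, (Gfun g v Mf ηf ε τ σ + Tfun v ε (β τ) τ σ)) = f σ := by
    rw [Finset.sum_add_distrib]
    have hTsum : ∑ τ ∈ Sigma, Tfun v ε (β τ) τ σ = β σ := by
      rw [Finset.sum_eq_single σ]
      · exact (Tfun_self hε).self_of_nhds
      · intro τ hτ hne
        exact (Tfun_flat (β := β τ) hε (hεlt τ hτ σ hσ (Ne.symm hne))).self_of_nhds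
      · intro habs
        exact absurd hσ habs
    rw [hTsum, hβdef]
    ring
  obtain ⟨hdiff, hgrad⟩ := hLoc.grad
  exact ⟨hval, hdiff, hgrad⟩

end ReluInterpAux

/-- **Exact interpolation of values and gradients on a finite set by a ReLU network.**
Given `S ⊆ ℝ^d`, a finite subset `Sigma ⊂ S`, and arbitrary prescribed values `f : Sigma → ℝ`
and gradients `g : Sigma → ℝ^d`, there is a single hidden layer ReLU network
`h(x) = c₀ + ∑ i, cᵢ * max 0 (⟪aᵢ, x⟫ + bᵢ)` with `h σ = f σ`, `h` differentiable at `σ`, and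
`∇h σ = g σ` for every `σ ∈ Sigma`. -/
theorem relu_network_exact_finite_sobolev_interpolation
    (d : ℕ) (S : Set (EuclideanSpace ℝ (Fin d)))
    (Sigma : Finset (EuclideanSpace ℝ (Fin d))) (hSigmaS : ↑Sigma ⊆ S)
    (f : EuclideanSpace ℝ (Fin d) → ℝ)
    (g : EuclideanSpace ℝ (Fin d) → EuclideanSpace ℝ (Fin d)) :
    ∃ (N : ℕ) (a : Fin N → EuclideanSpace ℝ (Fin d)) (b c : Fin N → ℝ) (c₀ : ℝ),
      let h : EuclideanSpace ℝ (Fin d) → ℝ :=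
        fun x => c₀ + ∑ i, c i * max 0 ((inner ℝ (a i) x : ℝ) + b i)
      ∀ σ ∈ Sigma, h σ = f σ ∧ DifferentiableAt ℝ h σ ∧ gradient h σ = g σ := by
  obtain ⟨h, ⟨N, a, b, c, hform⟩, hprops⟩ := ReluInterpAux.main Sigma f g
  refine ⟨N, a, b, c, 0, ?_⟩
  intro h' σ hσ
  have he : h' = h := by
    rw [hform]
    funext x
    show (0 : ℝ) + ∑ i, c i * max 0 (⟪a i, x⟫_ℝ + b i)
      = ∑ i, c i * max 0 (⟪a i, x⟫_ℝ + b i)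
    rw [zero_add]
  rw [he]
  exact hprops σ hσ
end

section
/- For μ ∈ ℝ and σ > 0 let p_{μ,σ}(x) = (1/(σ·√(2π))) · exp(−(x − μ)²/(2σ²)) denote the Gaussian probability density function. If μ₁, μ₂ ∈ ℝ, σ₁, σ₂ > 0 and there exists a single point x₀ ∈ ℝ with p_{μ₁,σ₁}(x₀) = p_{μ₂,σ₂}(x₀) and p'_{μ₁,σ₁}(x₀) = p'_{μ₂,σ₂}(x₀) (derivatives with respect to x), then μ₁ = μ₂ and σ₁ = σ₂. In other words, knowing the value and the derivative of a Gaussian pdf at one point uniquely determines its parameters, i.e. K_sob(F_G) = 1. -/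
open Real

lemma gauss_deriv (μ σ x₀ : ℝ) (hσ : σ ≠ 0) :
    deriv (fun x => (1 / (σ * Real.sqrt (2 * π))) * Real.exp (-(x - μ)^2 / (2 * σ^2))) x₀
      = (1 / (σ * Real.sqrt (2 * π))) * Real.exp (-(x₀ - μ)^2 / (2 * σ^2)) * (-(x₀ - μ) / σ^2) := by
  have h1 : HasDerivAt (fun x : ℝ => -(x - μ)^2 / (2 * σ^2))
      (-(2 * (x₀ - μ)^1 * 1) / (2 * σ^2)) x₀ :=
    ((((hasDerivAt_id x₀).sub_const μ).pow 2).neg).div_const _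
  have h2 := (h1.exp).const_mul (1 / (σ * Real.sqrt (2 * π)))
  rw [h2.deriv]
  field_simp

/-- **A Gaussian pdf is determined by its value and derivative at a single point:
`K_sob(F_G) = 1`.** If two Gaussian densities `p_{μ,σ}(x) = (σ√(2π))⁻¹ exp(−(x−μ)²/(2σ²))`
agree in value and in derivative at one point `x₀`, then they have the same parameters. -/
theorem gaussian_pdf_determined_by_value_and_deriv_at_one_point
    (p : ℝ → ℝ → ℝ → ℝ)
    (hp : ∀ μ σ x, p μ σ x = (1 / (σ * Real.sqrt (2 * π))) * Real.exp (-(x - μ)^2 / (2 * σ^2)))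
    (μ₁ μ₂ σ₁ σ₂ : ℝ) (hσ₁ : 0 < σ₁) (hσ₂ : 0 < σ₂) (x₀ : ℝ)
    (hval : p μ₁ σ₁ x₀ = p μ₂ σ₂ x₀)
    (hderiv : deriv (p μ₁ σ₁) x₀ = deriv (p μ₂ σ₂) x₀) :
    μ₁ = μ₂ ∧ σ₁ = σ₂ := by
  have hf1 : p μ₁ σ₁ = fun x => (1 / (σ₁ * Real.sqrt (2 * π))) * Real.exp (-(x - μ₁)^2 / (2 * σ₁^2)) :=
    funext (hp μ₁ σ₁)
  have hf2 : p μ₂ σ₂ = fun x => (1 / (σ₂ * Real.sqrt (2 * π))) * Real.exp (-(x - μ₂)^2 / (2 * σ₂^2)) :=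
    funext (hp μ₂ σ₂)
  rw [hf1, hf2, gauss_deriv μ₁ σ₁ x₀ hσ₁.ne', gauss_deriv μ₂ σ₂ x₀ hσ₂.ne'] at hderiv
  rw [hp, hp] at hval
  set s := Real.sqrt (2 * π) with hs
  have hspos : 0 < s := Real.sqrt_pos.mpr (by positivity)
  set E₁ := Real.exp (-(x₀ - μ₁)^2 / (2 * σ₁^2)) with hE1
  set E₂ := Real.exp (-(x₀ - μ₂)^2 / (2 * σ₂^2)) with hE2
  have hE1pos : 0 < E₁ := Real.exp_pos _
  have hE2pos : 0 < E₂ := Real.exp_pos _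
  have hvpos : 0 < (1 / (σ₁ * s)) * E₁ := by positivity
  -- derivative eq gives slope equality
  have ht : (x₀ - μ₁) / σ₁^2 = (x₀ - μ₂) / σ₂^2 := by
    have h := hderiv
    rw [hval] at h
    have := mul_left_cancel₀ (ne_of_gt (hval ▸ hvpos)) h
    have h2 : (x₀ - μ₁) / σ₁^2 = (x₀ - μ₂) / σ₂^2 := by
      field_simp at this ⊢
      linarith
    exact h2
  -- value eq gives log equation
  have hlog : Real.log σ₁ + (x₀ - μ₁)^2 / (2 * σ₁^2)
            = Real.log σ₂ + (x₀ - μ₂)^2 / (2 * σ₂^2) := by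
    have h := congrArg Real.log hval
    rw [Real.log_mul (by positivity) hE1pos.ne', Real.log_mul (by positivity) hE2pos.ne',
      hE1, hE2, Real.log_exp, Real.log_exp,
      one_div, Real.log_inv, one_div, Real.log_inv,
      Real.log_mul hσ₁.ne' hspos.ne', Real.log_mul hσ₂.ne' hspos.ne'] at h
    have e1 : -(x₀-μ₁)^2/(2*σ₁^2) = -((x₀-μ₁)^2/(2*σ₁^2)) := by ring
    have e2 : -(x₀-μ₂)^2/(2*σ₂^2) = -((x₀-μ₂)^2/(2*σ₂^2)) := by ring
    rw [e1, e2] at h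
    linarith [h]
  set t := (x₀ - μ₁) / σ₁^2 with hT
  have hA1 : x₀ - μ₁ = t * σ₁^2 := by rw [hT]; field_simp
  have hA2 : x₀ - μ₂ = t * σ₂^2 := by rw [ht]; field_simp
  have hlog2 : Real.log σ₁ + t^2 * σ₁^2 / 2 = Real.log σ₂ + t^2 * σ₂^2 / 2 := by
    rw [hA1, hA2] at hlog
    have e1 : (t * σ₁^2)^2 / (2 * σ₁^2) = t^2 * σ₁^2 / 2 := by
      field_simp
    have e2 : (t * σ₂^2)^2 / (2 * σ₂^2) = t^2 * σ₂^2 / 2 := by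
      field_simp
    rw [e1, e2] at hlog
    exact hlog
  have hσeq : σ₁ = σ₂ := by
    rcases lt_trichotomy σ₁ σ₂ with h | h | h
    · exfalso
      have hl := Real.log_lt_log hσ₁ h
      have hq : t^2 * σ₁^2 ≤ t^2 * σ₂^2 :=
        mul_le_mul_of_nonneg_left (by nlinarith) (sq_nonneg t)
      linarith
    · exact h
    · exfalso
      have hl := Real.log_lt_log hσ₂ h
      have hq : t^2 * σ₂^2 ≤ t^2 * σ₁^2 :=
        mul_le_mul_of_nonneg_left (by nlinarith) (sq_nonneg t)
      linarith
  refine ⟨?_, hσeq⟩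
  have : x₀ - μ₁ = x₀ - μ₂ := by rw [hA1, hA2, hσeq]
  linarith
end

section
/- Let φ : ℝ → ℝ be continuously differentiable with finite limits lim_{x→−∞} φ(x) = φ₋ and lim_{x→+∞} φ(x) = φ₊, and with lim_{x→−∞} φ'(x) = lim_{x→+∞} φ'(x) = 0. Then for every ε > 0 there exist finitely many breakpoints ξ₁ < … < ξ_N and a continuous function p : ℝ → ℝ that is affine on (−∞, ξ₁], on each [ξ_i, ξ_{i+1}], and on [ξ_N, ∞), such that |φ(x) − p(x)| < ε for every x ∈ ℝ and |φ'(x) − p'(x)| < ε for every x ∈ ℝ \ {ξ₁, …, ξ_N} (p being differentiable at every such x). -/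
open Filter

namespace PLaux

noncomputable def nu (a h : ℝ) (i : ℕ) : ℝ := a + i * h

noncomputable def slope (f : ℝ → ℝ) (a h : ℝ) (i : ℕ) : ℝ :=
  (f (nu a h (i + 1)) - f (nu a h i)) / h

noncomputable def pl (f : ℝ → ℝ) (a h : ℝ) (n : ℕ) (x : ℝ) : ℝ :=
  f a + ∑ i ∈ Finset.range n,
    slope f a h i * (min (max x (nu a h i)) (nu a h (i + 1)) - nu a h i)

lemma nu_mono {a h : ℝ} (hh : 0 ≤ h) : Monotone (nu a h) := fun i j hij => by
  unfold nu
  have : (i : ℝ) ≤ j := by exact_mod_cast hij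
  nlinarith

lemma nu_strictMono {a h : ℝ} (hh : 0 < h) : StrictMono (nu a h) := fun i j hij => by
  unfold nu
  have : (i : ℝ) < j := by exact_mod_cast hij
  nlinarith

lemma nu_succ_sub {a h : ℝ} (i : ℕ) : nu a h (i + 1) - nu a h i = h := by
  unfold nu; push_cast; ring

lemma pl_continuous (f : ℝ → ℝ) (a h : ℝ) (n : ℕ) : Continuous (pl f a h n) := by
  unfold pl
  refine continuous_const.add (continuous_finset_sum _ fun i _ => ?_)
  exact continuous_const.mul
    ((((continuous_id.max continuous_const).min continuous_const).sub continuous_const))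

lemma pl_left (f : ℝ → ℝ) {a h : ℝ} (hh : 0 ≤ h) (n : ℕ) {x : ℝ} (hx : x ≤ a) :
    pl f a h n x = f a := by
  unfold pl
  have hz : ∀ i ∈ Finset.range n,
      slope f a h i * (min (max x (nu a h i)) (nu a h (i + 1)) - nu a h i) = 0 := by
    intro i _
    have ha : a ≤ nu a h i := by
      have := nu_mono (a := a) hh (Nat.zero_le i)
      simpa [nu] using this
    have h1 : x ≤ nu a h i := le_trans hx ha
    have h2 : nu a h i ≤ nu a h (i + 1) := nu_mono hh (Nat.le_succ i)
    rw [max_eq_right h1, min_eq_left h2]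
    ring
  rw [Finset.sum_congr rfl hz]
  simp

lemma pl_right (f : ℝ → ℝ) {a h : ℝ} (hh : 0 < h) (n : ℕ) {x : ℝ} (hx : nu a h n ≤ x) :
    pl f a h n x = f (nu a h n) := by
  unfold pl
  have hz : ∀ i ∈ Finset.range n,
      slope f a h i * (min (max x (nu a h i)) (nu a h (i + 1)) - nu a h i)
        = f (nu a h (i + 1)) - f (nu a h i) := by
    intro i hi
    have hi' : i + 1 ≤ n := Finset.mem_range.mp hi
    have h1 : nu a h i ≤ x := le_trans (nu_mono hh.le (Nat.le_of_succ_le hi')) hx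
    have h2 : nu a h (i + 1) ≤ x := le_trans (nu_mono hh.le hi') hx
    rw [max_eq_left h1, min_eq_right h2, nu_succ_sub, slope, div_mul_cancel₀ _ hh.ne']
  rw [Finset.sum_congr rfl hz, Finset.sum_range_sub (fun i => f (nu a h i))]
  have : nu a h 0 = a := by simp [nu]
  rw [this]; ring

lemma pl_icc (f : ℝ → ℝ) {a h : ℝ} (hh : 0 < h) {n k : ℕ} (hk : k < n) {x : ℝ}
    (hx : x ∈ Set.Icc (nu a h k) (nu a h (k + 1))) :
    pl f a h n x = f (nu a h k) + slope f a h k * (x - nu a h k) := by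
  unfold pl
  have hsplit : Finset.range n = Finset.range (k + 1) ∪ Finset.Ico (k + 1) n := by
    rw [Finset.range_eq_Ico, Finset.range_eq_Ico]
    exact (Finset.Ico_union_Ico_eq_Ico (Nat.zero_le _) hk).symm
  rw [hsplit, Finset.sum_union (by
    rw [Finset.range_eq_Ico]
    exact Finset.Ico_disjoint_Ico_consecutive 0 (k + 1) n)]
  have hz2 : ∀ i ∈ Finset.Ico (k + 1) n,
      slope f a h i * (min (max x (nu a h i)) (nu a h (i + 1)) - nu a h i) = 0 := by
    intro i hi
    have hki : k + 1 ≤ i := (Finset.mem_Ico.mp hi).1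
    have h1 : x ≤ nu a h i := le_trans hx.2 (nu_mono hh.le hki)
    have h2 : nu a h i ≤ nu a h (i + 1) := nu_mono hh.le (Nat.le_succ i)
    rw [max_eq_right h1, min_eq_left h2]
    ring
  rw [Finset.sum_congr rfl hz2, Finset.sum_const_zero, add_zero, Finset.sum_range_succ]
  have hz1 : ∀ i ∈ Finset.range k,
      slope f a h i * (min (max x (nu a h i)) (nu a h (i + 1)) - nu a h i)
        = f (nu a h (i + 1)) - f (nu a h i) := by
    intro i hi
    have hi' : i + 1 ≤ k := Finset.mem_range.mp hi
    have h1 : nu a h i ≤ x := le_trans (nu_mono hh.le (Nat.le_of_succ_le hi')) hx.1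
    have h2 : nu a h (i + 1) ≤ x := le_trans (nu_mono hh.le hi') hx.1
    rw [max_eq_left h1, min_eq_right h2, nu_succ_sub, slope, div_mul_cancel₀ _ hh.ne']
  rw [Finset.sum_congr rfl hz1, Finset.sum_range_sub (fun i => f (nu a h i))]
  rw [max_eq_left hx.1, min_eq_left hx.2]
  have h0 : nu a h 0 = a := by simp [nu]
  rw [h0]; ring

lemma exists_interval {a h : ℝ} (hh : 0 < h) {n : ℕ} (hn : 0 < n) {x : ℝ}
    (h1 : a ≤ x) (h2 : x ≤ nu a h n) :
    ∃ k, k < n ∧ nu a h k ≤ x ∧ x ≤ nu a h (k + 1) := by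
  classical
  set P : ℕ → Prop := fun i => nu a h i ≤ x with hP
  have hP0 : P 0 := by simpa [P, nu] using h1
  set j := Nat.findGreatest P n with hj
  have hPj : P j := Nat.findGreatest_spec (Nat.zero_le n) hP0
  by_cases hjn : j = n
  · refine ⟨n - 1, Nat.sub_lt hn one_pos, ?_, ?_⟩
    · exact le_trans (nu_mono hh.le (Nat.sub_le n 1)) (hjn ▸ hPj)
    · have : n - 1 + 1 = n := Nat.succ_pred_eq_of_pos hn
      rw [this]; exact h2
  · have hjlt : j < n := lt_of_le_of_ne (Nat.findGreatest_le n) hjn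
    have hnP : ¬ P (j + 1) :=
      Nat.findGreatest_is_greatest (Nat.lt_succ_self j) hjlt
    exact ⟨j, hjlt, hPj, le_of_not_ge hnP⟩

lemma affine_hasDerivAt (c s d x : ℝ) :
    HasDerivAt (fun y => c + s * (y - d)) s x := by
  simpa using (((hasDerivAt_id x).sub_const d).const_mul s).const_add c

end PLaux

open PLaux in
/-- **Piecewise-linear Sobolev approximation on all of `ℝ` (Lemma 2).**
Let `φ : ℝ → ℝ` be `C¹` with finite limits `φ₋`, `φ₊` at `∓∞` and with `φ' → 0` at `±∞`.
For every `ε > 0` there are breakpoints `ξ₁ < … < ξ_N` and a continuous `p : ℝ → ℝ`, affine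
on `(−∞, ξ₁]`, on each `[ξ_i, ξ_{i+1}]`, and on `[ξ_N, ∞)`, with `|φ x - p x| < ε` on `ℝ`,
and `p` differentiable with `|φ' x - p' x| < ε` at every non-breakpoint. -/
theorem piecewise_linear_sobolev_approximation_on_real_line
    (φ : ℝ → ℝ) (hφ : ContDiff ℝ 1 φ) (φm φp : ℝ)
    (hlim_bot : Tendsto φ atBot (nhds φm)) (hlim_top : Tendsto φ atTop (nhds φp))
    (hderiv_bot : Tendsto (deriv φ) atBot (nhds 0))
    (hderiv_top : Tendsto (deriv φ) atTop (nhds 0))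
    (ε : ℝ) (hε : 0 < ε) :
    ∃ (N : ℕ) (ξ : Fin (N + 1) → ℝ) (p : ℝ → ℝ),
      StrictMono ξ ∧
      Continuous p ∧
      (∃ a b : ℝ, ∀ x ∈ Set.Iic (ξ 0), p x = a * x + b) ∧
      (∀ i : Fin N, ∃ a b : ℝ,
        ∀ x ∈ Set.Icc (ξ i.castSucc) (ξ i.succ), p x = a * x + b) ∧
      (∃ a b : ℝ, ∀ x ∈ Set.Ici (ξ (Fin.last N)), p x = a * x + b) ∧
      (∀ x : ℝ, |φ x - p x| < ε) ∧
      (∀ x : ℝ, x ∉ Set.range ξ →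
        DifferentiableAt ℝ p x ∧ |deriv φ x - deriv p x| < ε) := by
  classical
  obtain ⟨A, hA⟩ : ∃ A : ℝ, ∀ x ≤ A, |φ x - φm| < ε / 3 ∧ |deriv φ x| < ε := by
    have h1 : ∀ᶠ x in atBot, |φ x - φm| < ε / 3 := by
      have := Metric.tendsto_nhds.mp hlim_bot (ε / 3) (by linarith)
      simpa [Real.dist_eq] using this
    have h2 : ∀ᶠ x in atBot, |deriv φ x| < ε := by
      have := Metric.tendsto_nhds.mp hderiv_bot ε hε
      simpa [Real.dist_eq] using this
    exact eventually_atBot.mp (h1.and h2)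
  obtain ⟨B, hB⟩ : ∃ B : ℝ, ∀ x ≥ B, |φ x - φp| < ε / 3 ∧ |deriv φ x| < ε := by
    have h1 : ∀ᶠ x in atTop, |φ x - φp| < ε / 3 := by
      have := Metric.tendsto_nhds.mp hlim_top (ε / 3) (by linarith)
      simpa [Real.dist_eq] using this
    have h2 : ∀ᶠ x in atTop, |deriv φ x| < ε := by
      have := Metric.tendsto_nhds.mp hderiv_top ε hε
      simpa [Real.dist_eq] using this
    exact eventually_atTop.mp (h1.and h2)
  set a := min A B - 1 with ha
  set b := max A B + 1 with hb
  have hab : a < b := by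
    have := min_le_max (a := A) (b := B)
    simp only [ha, hb]; linarith
  have haA : a ≤ A := by have := min_le_left A B; simp only [ha]; linarith
  have hbB : B ≤ b := by have := le_max_right A B; simp only [hb]; linarith
  have hd : Continuous (deriv φ) := hφ.continuous_deriv le_rfl
  have hucfull :=
    (isCompact_Icc (a := a) (b := b)).uniformContinuousOn_of_continuous hd.continuousOn
  obtain ⟨δ, hδ0, hδ⟩ := Metric.uniformContinuousOn_iff.mp hucfull (ε / 2) (by linarith)
  obtain ⟨n, hn⟩ := exists_nat_gt ((b - a) / min δ 1)
  have hmin : 0 < min δ 1 := lt_min hδ0 one_pos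
  have hn0 : 0 < n := by
    have h0 : (0 : ℝ) < (b - a) / min δ 1 := div_pos (by linarith) hmin
    exact_mod_cast Nat.cast_pos.mp (lt_trans h0 hn)
  have hnR : (0 : ℝ) < n := by exact_mod_cast hn0
  set h := (b - a) / n with hdef
  have hh : 0 < h := div_pos (by linarith) hnR
  have hh1 : h < min δ 1 := by
    rw [hdef, div_lt_iff₀ hnR]
    have := (div_lt_iff₀ hmin).mp hn
    nlinarith
  have hhδ : h < δ := lt_of_lt_of_le hh1 (min_le_left _ _)
  have hhone : h ≤ 1 := le_of_lt (lt_of_lt_of_le hh1 (min_le_right _ _))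
  have hnub : nu a h n = b := by
    have hne : (n : ℝ) ≠ 0 := ne_of_gt hnR
    simp only [nu, hdef]
    field_simp
    ring
  have hnu0 : nu a h 0 = a := by simp [nu]
  have hge : ∀ k : ℕ, a ≤ nu a h k := fun k => by
    have := nu_mono (a := a) hh.le (Nat.zero_le k)
    rwa [hnu0] at this
  have hleb : ∀ k : ℕ, k ≤ n → nu a h k ≤ b := fun k hk => by
    have := nu_mono (a := a) hh.le hk
    rwa [hnub] at this
  have hdiffφ : ∀ y : ℝ, HasDerivAt φ (deriv φ y) y := fun y =>
    ((hφ.differentiable one_ne_zero) y).hasDerivAt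
  refine ⟨n, fun i => nu a h i, pl φ a h n, ?_, pl_continuous φ a h n, ?_, ?_, ?_, ?_, ?_⟩
  · intro i j hij
    exact nu_strictMono hh (by exact_mod_cast hij)
  · refine ⟨0, φ a, fun x hx => ?_⟩
    have hx' : x ≤ a := by simpa [nu] using hx
    rw [pl_left φ hh.le n hx']; ring
  · intro i
    refine ⟨slope φ a h i, φ (nu a h i) - slope φ a h i * nu a h i, fun x hx => ?_⟩
    have hx' : x ∈ Set.Icc (nu a h i.val) (nu a h (i.val + 1)) := by
      simpa [Fin.coe_castSucc, Fin.val_succ] using hx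
    rw [pl_icc φ hh i.isLt hx']; ring
  · refine ⟨0, φ b, fun x hx => ?_⟩
    have hx' : nu a h n ≤ x := by simpa [Fin.val_last] using hx
    rw [pl_right φ hh n hx', hnub]; ring
  · -- value estimate
    intro x
    rcases le_or_gt x a with hxa | hxa
    · rw [pl_left φ hh.le n hxa]
      have h1 := (hA x (le_trans hxa haA)).1
      have h2 := (hA a haA).1
      have h3 : |φ x - φ a| ≤ |φ x - φm| + |φ a - φm| := by
        have := abs_sub_le (φ x) φm (φ a)
        rwa [abs_sub_comm φm (φ a)] at this
      linarith
    rcases le_or_gt b x with hbx | hbx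
    · rw [pl_right φ hh n (by rw [hnub]; exact hbx), hnub]
      have h1 := (hB x (le_trans hbB hbx)).1
      have h2 := (hB b hbB).1
      have h3 : |φ x - φ b| ≤ |φ x - φp| + |φ b - φp| := by
        have := abs_sub_le (φ x) φp (φ b)
        rwa [abs_sub_comm φp (φ b)] at this
      linarith
    · obtain ⟨k, hkn, hk1, hk2⟩ :=
        exists_interval hh hn0 hxa.le (by rw [hnub]; exact hbx.le)
      rw [pl_icc φ hh hkn ⟨hk1, hk2⟩]
      rcases eq_or_lt_of_le hk1 with heq | hlt
      · rw [← heq]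
        simpa using hε
      · have hsub : nu a h (k + 1) - nu a h k = h := nu_succ_sub k
        have hlt2 : nu a h k < nu a h (k + 1) := nu_strictMono hh (Nat.lt_succ_self k)
        obtain ⟨c2, hc2, hc2e⟩ := exists_hasDerivAt_eq_slope φ (deriv φ) hlt2
          (hφ.continuous.continuousOn) (fun y _ => hdiffφ y)
        obtain ⟨c1, hc1, hc1e⟩ := exists_hasDerivAt_eq_slope φ (deriv φ) hlt
          (hφ.continuous.continuousOn) (fun y _ => hdiffφ y)
        have hsl : slope φ a h k = deriv φ c2 := by
          rw [PLaux.slope, hc2e, hsub]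
        have hne : x - nu a h k ≠ 0 := ne_of_gt (by linarith)
        have key : φ x - (φ (nu a h k) + slope φ a h k * (x - nu a h k))
            = (deriv φ c1 - deriv φ c2) * (x - nu a h k) := by
          rw [hsl, hc1e]
          field_simp
          ring
        have hk1n : k + 1 ≤ n := hkn
        have m1 : c1 ∈ Set.Icc a b :=
          ⟨le_trans (hge k) hc1.1.le, le_trans hc1.2.le (le_trans hk2 (hleb (k + 1) hk1n))⟩
        have m2 : c2 ∈ Set.Icc a b :=
          ⟨le_trans (hge k) hc2.1.le, le_trans hc2.2.le (hleb (k + 1) hk1n)⟩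
        have hdist : dist c1 c2 < δ := by
          rw [Real.dist_eq, abs_sub_lt_iff]
          constructor <;> [linarith [hc1.2, hc2.1, hk2]; linarith [hc1.1, hc2.2]]
        have hdd : |deriv φ c1 - deriv φ c2| < ε / 2 := by
          have := hδ c1 m1 c2 m2 hdist
          rwa [Real.dist_eq] at this
        rw [key, abs_mul]
        have t0 : 0 ≤ x - nu a h k := by linarith
        have t1 : |x - nu a h k| ≤ 1 := by
          rw [abs_of_nonneg t0]; linarith
        calc |deriv φ c1 - deriv φ c2| * |x - nu a h k|
            ≤ |deriv φ c1 - deriv φ c2| * 1 :=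
              mul_le_mul_of_nonneg_left t1 (abs_nonneg _)
          _ = |deriv φ c1 - deriv φ c2| := mul_one _
          _ < ε / 2 := hdd
          _ < ε := by linarith
  · -- derivative estimate
    intro x hx
    have hxne : ∀ i : ℕ, i ≤ n → x ≠ nu a h i := by
      intro i hi hxe
      exact hx ⟨⟨i, Nat.lt_succ_of_le hi⟩, hxe.symm⟩
    rcases lt_or_ge x a with hxa | hxa
    · have hev : pl φ a h n =ᶠ[nhds x] fun _ => φ a := by
        filter_upwards [Iio_mem_nhds hxa] with y hy
        exact pl_left φ hh.le n (le_of_lt hy)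
      have hder : HasDerivAt (pl φ a h n) 0 x :=
        (hasDerivAt_const x (φ a)).congr_of_eventuallyEq hev
      refine ⟨hder.differentiableAt, ?_⟩
      rw [hder.deriv]
      simpa using (hA x (le_of_lt (lt_of_lt_of_le hxa haA))).2
    rcases lt_or_ge b x with hbx | hbx
    · have hev : pl φ a h n =ᶠ[nhds x] fun _ => φ b := by
        filter_upwards [Ioi_mem_nhds hbx] with y hy
        rw [pl_right φ hh n (by rw [hnub]; exact le_of_lt hy), hnub]
      have hder : HasDerivAt (pl φ a h n) 0 x :=
        (hasDerivAt_const x (φ b)).congr_of_eventuallyEq hev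
      refine ⟨hder.differentiableAt, ?_⟩
      rw [hder.deriv]
      simpa using (hB x (le_of_lt (lt_of_le_of_lt hbB hbx))).2
    · obtain ⟨k, hkn, hk1, hk2⟩ := exists_interval hh hn0 hxa (by rw [hnub]; exact hbx)
      have hk1n : k + 1 ≤ n := hkn
      have hlt1 : nu a h k < x := lt_of_le_of_ne hk1 (Ne.symm (hxne k (le_of_lt hkn)))
      have hlt2 : x < nu a h (k + 1) := lt_of_le_of_ne hk2 (hxne (k + 1) hk1n)
      have hev : pl φ a h n =ᶠ[nhds x]
          fun y => φ (nu a h k) + slope φ a h k * (y - nu a h k) := by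
        filter_upwards [isOpen_Ioo.mem_nhds (Set.mem_Ioo.mpr ⟨hlt1, hlt2⟩)] with y hy
        exact pl_icc φ hh hkn ⟨hy.1.le, hy.2.le⟩
      have hder : HasDerivAt (pl φ a h n) (slope φ a h k) x :=
        (affine_hasDerivAt (φ (nu a h k)) (slope φ a h k) (nu a h k) x).congr_of_eventuallyEq hev
      refine ⟨hder.differentiableAt, ?_⟩
      rw [hder.deriv]
      have hsub : nu a h (k + 1) - nu a h k = h := nu_succ_sub k
      have hltkk : nu a h k < nu a h (k + 1) := nu_strictMono hh (Nat.lt_succ_self k)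
      obtain ⟨c2, hc2, hc2e⟩ := exists_hasDerivAt_eq_slope φ (deriv φ) hltkk
        (hφ.continuous.continuousOn) (fun y _ => hdiffφ y)
      have hsl : slope φ a h k = deriv φ c2 := by
        rw [PLaux.slope, hc2e, hsub]
      have m1 : x ∈ Set.Icc a b := ⟨hxa, hbx⟩
      have m2 : c2 ∈ Set.Icc a b :=
        ⟨le_trans (hge k) hc2.1.le, le_trans hc2.2.le (hleb (k + 1) hk1n)⟩
      have hdist : dist x c2 < δ := by
        rw [Real.dist_eq, abs_sub_lt_iff]
        constructor <;> [linarith [hc2.1]; linarith [hc2.2]]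
      have := hδ x m1 c2 m2 hdist
      rw [Real.dist_eq] at this
      rw [hsl]
      linarith
end

section
/- Let σ(x) = 1/(1 + e^{−x}) be the logistic sigmoid. For every ε > 0 there exist N ∈ ℕ, real numbers c₀, c₁, …, c_N and points ξ₁ < … < ξ_N such that the finite combination of ReLU functions h(x) = c₀ + Σ_{i=1}^N cᵢ · max(0, x − ξᵢ) satisfies |σ(x) − h(x)| < ε for every x ∈ ℝ and, for every x ∈ ℝ \ {ξ₁, …, ξ_N}, h is differentiable at x with |σ'(x) − h'(x)| < ε. -/
open Real Set Finset

namespace ReluSig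

noncomputable def sg (x : ℝ) : ℝ := 1 / (1 + Real.exp (-x))

lemma den_pos (x : ℝ) : 0 < 1 + Real.exp (-x) := by positivity
lemma sg_pos (x : ℝ) : 0 < sg x := by unfold sg; positivity
lemma sg_lt_one (x : ℝ) : sg x < 1 := by
  unfold sg; rw [div_lt_one (den_pos x)]; linarith [Real.exp_pos (-x)]

lemma hasDerivAt_sg (x : ℝ) : HasDerivAt sg (sg x * (1 - sg x)) x := by
  have h1 : HasDerivAt (fun y : ℝ => 1 + Real.exp (-y)) (-Real.exp (-x)) x := by
    simpa using ((Real.hasDerivAt_exp (-x)).comp x ((hasDerivAt_id x).neg)).const_add 1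
  have h2 := h1.inv (ne_of_gt (den_pos x))
  have h3 : HasDerivAt (fun y : ℝ => (1 + Real.exp (-y))⁻¹)
      (Real.exp (-x) / (1 + Real.exp (-x))^2) x := by
    exact h2.congr_deriv (by ring)
  have heq : sg = fun y : ℝ => (1 + Real.exp (-y))⁻¹ := by
    funext y; simp [sg, one_div]
  rw [heq]
  convert h3 using 1
  have hd := ne_of_gt (den_pos x)
  simp only [sg]
  field_simp
  ring

lemma deriv_sg : deriv sg = fun x => sg x * (1 - sg x) := by
  funext x; exact (hasDerivAt_sg x).deriv

lemma diff_sg : Differentiable ℝ sg := fun x => (hasDerivAt_sg x).differentiableAt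

lemma sg_mono : StrictMono sg := by
  apply strictMono_of_deriv_pos
  intro x
  rw [deriv_sg]
  beta_reduce
  have := sg_pos x; have := sg_lt_one x; nlinarith

lemma quarter_bound {t : ℝ} (h1 : 0 < t) (h2 : t < 1) : |t * (1 - t)| ≤ 1/4 := by
  rw [abs_le]; constructor <;> nlinarith [sq_nonneg (2*t - 1)]

lemma hasDerivAt_deriv_sg (x : ℝ) :
    HasDerivAt (deriv sg) (sg x * (1 - sg x) * (1 - 2 * sg x)) x := by
  rw [deriv_sg]
  have h : HasDerivAt (fun y => sg y * (1 - sg y))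
      (sg x * (1 - sg x) * (1 - sg x) + sg x * (-(sg x * (1 - sg x)))) x :=
    (hasDerivAt_sg x).mul ((hasDerivAt_sg x).const_sub 1)
  convert h using 1; ring

lemma deriv_sg_lipschitz (u v : ℝ) : |deriv sg u - deriv sg v| ≤ (1/4) * |u - v| := by
  have hb : ∀ x ∈ (Set.univ : Set ℝ), ‖deriv (deriv sg) x‖ ≤ 1/4 := by
    intro x _
    rw [(hasDerivAt_deriv_sg x).deriv, Real.norm_eq_abs, abs_mul]
    have h1 := sg_pos x; have h2 := sg_lt_one x
    have ha := quarter_bound h1 h2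
    have hc : |1 - 2 * sg x| ≤ 1 := by rw [abs_le]; constructor <;> linarith
    calc |sg x * (1 - sg x)| * |1 - 2 * sg x| ≤ (1/4) * 1 := by
          apply mul_le_mul ha hc (abs_nonneg _) (by norm_num)
      _ = 1/4 := by norm_num
  have := convex_univ.norm_image_sub_le_of_norm_deriv_le
    (fun x _ => (hasDerivAt_deriv_sg x).differentiableAt) hb (Set.mem_univ v) (Set.mem_univ u)
  simpa [Real.norm_eq_abs] using this

lemma sg_deriv_le_self (x : ℝ) : deriv sg x ≤ sg x := by
  rw [deriv_sg]; beta_reduce; have h1 := sg_pos x; have h2 := sg_lt_one x; nlinarith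

lemma sg_deriv_le_one_sub (x : ℝ) : deriv sg x ≤ 1 - sg x := by
  rw [deriv_sg]; beta_reduce; have h1 := sg_pos x; have h2 := sg_lt_one x; nlinarith

lemma sg_deriv_pos (x : ℝ) : 0 < deriv sg x := by
  rw [deriv_sg]; beta_reduce; have h1 := sg_pos x; have h2 := sg_lt_one x; nlinarith

lemma sg_neg (x : ℝ) : sg (-x) = 1 - sg x := by
  unfold sg
  rw [neg_neg]
  have h1 := Real.exp_pos x; have h2 := Real.exp_pos (-x)
  have h3 : Real.exp (-x) * Real.exp x = 1 := by rw [← Real.exp_add]; simp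
  field_simp
  nlinarith

lemma sg_neg_lt_exp (t : ℝ) : sg (-t) < Real.exp (-t) := by
  unfold sg
  rw [neg_neg, Real.exp_neg, ← one_div]
  exact one_div_lt_one_div_of_lt (Real.exp_pos t) (by linarith)

/-- previous value with 0 default -/
def sprev (s : ℕ → ℝ) : ℕ → ℝ := fun i => if i = 0 then 0 else s (i - 1)

lemma abel (s R : ℕ → ℝ) : ∀ m : ℕ,
    ∑ i ∈ Finset.range (m+1), (s i - sprev s i) * R i
      = s m * R m + ∑ i ∈ Finset.range m, s i * (R i - R (i+1)) := by
  intro m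
  induction m with
  | zero => simp [sprev]
  | succ m ih =>
      rw [Finset.sum_range_succ, ih, Finset.sum_range_succ]
      simp [sprev]
      ring

lemma tele (s : ℕ → ℝ) : ∀ m : ℕ,
    ∑ i ∈ Finset.range (m+1), (s i - sprev s i) = s m := by
  intro m
  induction m with
  | zero => simp [sprev]
  | succ m ih => rw [Finset.sum_range_succ, ih]; simp [sprev]

/-- difference of two ReLUs equals clamped increment -/
lemma relu_diff (x u v : ℝ) (huv : u ≤ v) :
    max 0 (x - u) - max 0 (x - v) = max u (min x v) - u := by
  rcases le_or_gt x u with h | h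
  · rw [max_eq_left (by linarith), max_eq_left (by linarith),
      max_eq_left (le_trans (min_le_left x v) h)]
    ring_nf
  · rcases le_or_gt x v with h2 | h2
    · rw [max_eq_right (by linarith), max_eq_left (by linarith), min_eq_left h2,
        max_eq_right (le_of_lt h)]
      ring
    · rw [max_eq_right (by linarith), max_eq_right (by linarith), min_eq_right (le_of_lt h2),
        max_eq_right huv]
      ring

/-- telescoping of clamped increments of an arbitrary function -/
lemma clamp_tele (f : ℝ → ℝ) (ξ : ℕ → ℝ) (hξ : Monotone ξ) (x : ℝ) : ∀ m : ℕ,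
    ∑ i ∈ Finset.range m, (f (max (ξ i) (min x (ξ (i+1)))) - f (ξ i))
      = f (max (ξ 0) (min x (ξ m))) - f (ξ 0) := by
  intro m
  induction m with
  | zero =>
      have : max (ξ 0) (min x (ξ 0)) = ξ 0 := max_eq_left (min_le_right _ _)
      simp [this]
  | succ m ih =>
      rw [Finset.sum_range_succ, ih]
      rcases le_or_gt x (ξ m) with h | h
      · have h1 : min x (ξ (m+1)) = min x (ξ m) := by
          rw [min_eq_left (le_trans h (hξ (Nat.le_succ m))), min_eq_left h]
        rw [h1, max_eq_left (min_le_right x (ξ m))]; ring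
      · have h0 : ξ 0 ≤ ξ m := hξ (Nat.zero_le m)
        have h1 : max (ξ 0) (min x (ξ m)) = ξ m := by
          rw [min_eq_right (le_of_lt h)]; exact max_eq_right h0
        have h2 : max (ξ m) (min x (ξ (m+1))) = min x (ξ (m+1)) :=
          max_eq_right (le_min (le_of_lt h) (hξ (Nat.le_succ m)))
        have h3 : max (ξ 0) (min x (ξ (m+1))) = min x (ξ (m+1)) :=
          max_eq_right (le_min (le_trans h0 (le_of_lt h)) (le_trans h0 (hξ (Nat.le_succ m))))
        rw [h1, h2, h3]; ring

/-- location of a point avoiding all nodes -/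
lemma locate (ξ : ℕ → ℝ) (x : ℝ) : ∀ m : ℕ, (∀ i ≤ m, x ≠ ξ i) →
    x < ξ 0 ∨ ξ m < x ∨ ∃ k < m, ξ k < x ∧ x < ξ (k+1) := by
  intro m
  induction m with
  | zero =>
      intro hne
      rcases lt_or_gt_of_ne (hne 0 le_rfl) with h | h
      · exact Or.inl h
      · exact Or.inr (Or.inl h)
  | succ m ih =>
      intro hne
      rcases ih (fun i hi => hne i (le_trans hi (Nat.le_succ m))) with h | h | ⟨k, hk, h1, h2⟩
      · exact Or.inl h
      · rcases lt_or_gt_of_ne (hne (m+1) le_rfl) with h2 | h2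
        · exact Or.inr (Or.inr ⟨m, Nat.lt_succ_self m, h, h2⟩)
        · exact Or.inr (Or.inl h2)
      · exact Or.inr (Or.inr ⟨k, lt_trans hk (Nat.lt_succ_self m), h1, h2⟩)

lemma seg_deriv {a b x : ℝ} (hab : a < b) (hax : a ≤ x) (hxb : x ≤ b) :
    |deriv sg x - (sg b - sg a) / (b - a)| ≤ (b - a) / 4 := by
  obtain ⟨η, hη, hslope⟩ := exists_deriv_eq_slope sg hab diff_sg.continuous.continuousOn
    diff_sg.differentiableOn
  rw [← hslope]
  calc |deriv sg x - deriv sg η| ≤ (1/4) * |x - η| := deriv_sg_lipschitz x η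
    _ ≤ (1/4) * (b - a) := by
        apply mul_le_mul_of_nonneg_left _ (by norm_num)
        rw [abs_le]; exact ⟨by linarith [hη.1, hη.2], by linarith [hη.1, hη.2]⟩
    _ = (b-a)/4 := by ring

lemma seg_fun {a b x : ℝ} (hab : a < b) (hax : a ≤ x) (hxb : x ≤ b) :
    |sg x - sg a - (sg b - sg a) / (b - a) * (x - a)| ≤ (b - a) / 4 * (b - a) := by
  set K := (sg b - sg a) / (b - a) with hK
  have hg : ∀ t : ℝ, HasDerivAt (fun t => sg t - K * t) (deriv sg t - K) t := by
    intro t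
    have := ((diff_sg t).hasDerivAt.sub ((hasDerivAt_id t).const_mul K)); simp at this; exact this
  have hb : ∀ t ∈ Icc a b, ‖deriv (fun t => sg t - K * t) t‖ ≤ (b - a) / 4 := by
    intro t ht
    rw [(hg t).deriv, Real.norm_eq_abs]
    exact seg_deriv hab ht.1 ht.2
  have key := (convex_Icc a b).norm_image_sub_le_of_norm_deriv_le
    (fun t _ => (hg t).differentiableAt) hb (Set.left_mem_Icc.2 (le_of_lt hab))
    (Set.mem_Icc.2 ⟨hax, hxb⟩)
  rw [Real.norm_eq_abs, Real.norm_eq_abs] at key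
  have h1 : sg x - K * x - (sg a - K * a) = sg x - sg a - K * (x - a) := by ring
  rw [h1] at key
  calc |sg x - sg a - K * (x - a)| ≤ (b - a)/4 * |x - a| := key
    _ ≤ (b - a)/4 * (b - a) := by
        apply mul_le_mul_of_nonneg_left _ (by linarith)
        rw [abs_le]; exact ⟨by linarith, by linarith⟩

lemma relu_hasDerivAt (ci ξi x : ℝ) (hne : x ≠ ξi) :
    HasDerivAt (fun t => ci * max 0 (t - ξi)) (if ξi < x then ci else 0) x := by
  rcases lt_or_gt_of_ne hne with h | h
  · rw [if_neg (by linarith)]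
    have hev : (fun t => ci * max 0 (t - ξi)) =ᶠ[nhds x] (fun _ => 0) := by
      filter_upwards [Iio_mem_nhds h] with t ht
      rw [max_eq_left (by simp only [Set.mem_Iio] at ht; linarith), mul_zero]
    exact (hasDerivAt_const x 0).congr_of_eventuallyEq hev
  · rw [if_pos h]
    have hev : (fun t => ci * max 0 (t - ξi)) =ᶠ[nhds x] (fun t => ci * (t - ξi)) := by
      filter_upwards [Ioi_mem_nhds h] with t ht
      rw [max_eq_right (by simp only [Set.mem_Ioi] at ht; linarith)]
    have hld : HasDerivAt (fun t => ci * (t - ξi)) ci x := by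
      simpa using ((hasDerivAt_id x).sub_const ξi).const_mul ci
    exact hld.congr_of_eventuallyEq hev

end ReluSig
/-- **ReLU combinations approximate the sigmoid in Sobolev sense (Corollary 1).**
Let `σ(x) = 1/(1 + e^{−x})`. For every `ε > 0` there is a finite combination of ReLU
functions `h(x) = c₀ + ∑ i, cᵢ * max 0 (x − ξᵢ)` with `|σ x − h x| < ε` for all `x`, and
`h` differentiable with `|σ' x − h' x| < ε` at every `x` that is not a breakpoint. -/
theorem relu_combination_sobolev_approximates_sigmoid
    (sigmoid : ℝ → ℝ) (hsigmoid : ∀ x, sigmoid x = 1 / (1 + Real.exp (-x)))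
    (ε : ℝ) (hε : 0 < ε) :
    ∃ (N : ℕ) (c₀ : ℝ) (c ξ : Fin N → ℝ),
      StrictMono ξ ∧
      let h : ℝ → ℝ := fun x => c₀ + ∑ i, c i * max 0 (x - ξ i)
      (∀ x : ℝ, |sigmoid x - h x| < ε) ∧
      (∀ x : ℝ, x ∉ Set.range ξ →
        DifferentiableAt ℝ h x ∧ |deriv sigmoid x - deriv h x| < ε) := by
  open ReluSig in
  have hsg : sigmoid = ReluSig.sg := funext fun x => hsigmoid x
  subst hsg
  -- choose the truncation level M
  set μ : ℝ := min (ε/2) 1 with hμ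
  have hμpos : 0 < μ := lt_min (by linarith) one_pos
  set M : ℝ := 1 - Real.log μ with hMdef
  have hM1 : 1 ≤ M := by
    have : Real.log μ ≤ 0 := Real.log_nonpos (le_of_lt hμpos) (min_le_right _ _)
    linarith
  have hM0 : 0 < M := by linarith
  have htail : ReluSig.sg (-M) < ε/2 := by
    refine lt_trans (ReluSig.sg_neg_lt_exp M) ?_
    have h1 : Real.exp (-M) = μ * Real.exp (-1) := by
      rw [show -M = Real.log μ + (-1) by rw [hMdef]; ring, Real.exp_add, Real.exp_log hμpos]
    rw [h1]
    have h2 : Real.exp (-1) < 1 := Real.exp_lt_one_iff.2 (by norm_num)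
    calc μ * Real.exp (-1) < μ * 1 := by exact mul_lt_mul_of_pos_left h2 hμpos
      _ = μ := mul_one μ
      _ ≤ ε/2 := min_le_left _ _
  -- mesh size
  set δ : ℝ := min 1 (ε/(M+1)) with hδdef
  have hδ0 : 0 < δ := lt_min one_pos (by positivity)
  have hδ1 : δ ≤ 1 := min_le_left _ _
  have hδε' : δ ≤ ε/(M+1) := min_le_right _ _
  have hδε : δ < ε := by
    rcases le_or_gt ε 1 with h | h
    · calc δ ≤ ε/(M+1) := hδε'
        _ < ε := by rw [div_lt_iff₀ (by linarith)]; nlinarith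
    · calc δ ≤ 1 := hδ1
        _ < ε := h
  set n : ℕ := ⌈2*M/δ⌉₊ with hndef
  have hn2M : 2*M ≤ n * δ := by
    rw [← div_le_iff₀ hδ0]
    exact Nat.le_ceil _
  have hnup : (n:ℝ) < 2*M/δ + 1 := Nat.ceil_lt_add_one (by positivity)
  have hsum_small : (n:ℝ) * (δ/4*δ) < ε/2 := by
    have h1 : (n:ℝ) * δ < 2*M + δ := by
      have h2 := mul_lt_mul_of_pos_right hnup hδ0
      rw [add_mul, div_mul_cancel₀ _ (ne_of_gt hδ0), one_mul] at h2
      exact h2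
    have h2 : (n:ℝ) * δ * δ ≤ (2*M + δ) * δ := by nlinarith
    have h3 : (2*M + δ) * δ ≤ (2*M + 1) * (ε/(M+1)) := by nlinarith
    have h4 : (2*M + 1) * (ε/(M+1)) < 2*ε := by
      rw [← mul_div_assoc, div_lt_iff₀ (by linarith : (0:ℝ) < M+1)]
      nlinarith
    nlinarith [(Nat.cast_nonneg n : (0:ℝ) ≤ (n:ℝ))]
  -- nodes
  set ξℕ : ℕ → ℝ := fun i => -M + i * δ with hξdef
  have hξmono : StrictMono ξℕ := fun i j hij => by
    simp only [hξdef]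
    have : (i:ℝ) < j := Nat.cast_lt.2 hij
    nlinarith
  have hξstep : ∀ i : ℕ, ξℕ (i+1) - ξℕ i = δ := by
    intro i; simp only [hξdef]; push_cast; ring
  have hξ0 : ξℕ 0 = -M := by simp [hξdef]
  have hξn : M ≤ ξℕ n := by simp only [hξdef]; linarith [hn2M]
  -- slopes and coefficients
  set s : ℕ → ℝ := fun i => if i < n then (ReluSig.sg (ξℕ (i+1)) - ReluSig.sg (ξℕ i)) / δ else 0
    with hsdef
  have hsn : s n = 0 := by simp [hsdef]
  set c : Fin (n+1) → ℝ := fun i => s i - ReluSig.sprev s i with hcdef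
  refine ⟨n+1, ReluSig.sg (-M), c, fun i => ξℕ i, fun i j hij => hξmono hij, ?_, ?_⟩
  · -- function approximation
    intro x
    have hval : (∑ i : Fin (n+1), c i * max 0 (x - ξℕ i))
        = ∑ i ∈ Finset.range n, s i * (max (ξℕ i) (min x (ξℕ (i+1))) - ξℕ i) := by
      rw [Fin.sum_univ_eq_sum_range (fun i => (s i - ReluSig.sprev s i) * max 0 (x - ξℕ i)) (n+1)]
      rw [ReluSig.abel s (fun i => max 0 (x - ξℕ i)) n, hsn, zero_mul, zero_add]
      exact Finset.sum_congr rfl fun i _ =>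
        congrArg (s i * ·) (ReluSig.relu_diff x _ _ (le_of_lt (hξmono (Nat.lt_succ_self i))))
    show |ReluSig.sg x - (ReluSig.sg (-M) + ∑ i : Fin (n+1), c i * max 0 (x - ξℕ i))| < ε
    rw [hval]
    set T := max (ξℕ 0) (min x (ξℕ n)) with hT
    have hPtele := ReluSig.clamp_tele ReluSig.sg ξℕ hξmono.monotone x n
    have hsplit : ReluSig.sg x
        - (ReluSig.sg (-M) + ∑ i ∈ Finset.range n, s i * (max (ξℕ i) (min x (ξℕ (i+1))) - ξℕ i))
        = (ReluSig.sg x - ReluSig.sg T) + ∑ i ∈ Finset.range n,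
            ((ReluSig.sg (max (ξℕ i) (min x (ξℕ (i+1)))) - ReluSig.sg (ξℕ i))
              - s i * (max (ξℕ i) (min x (ξℕ (i+1))) - ξℕ i)) := by
      rw [Finset.sum_sub_distrib, hPtele, ← hT, hξ0]
      ring
    rw [hsplit]
    have hterm : ∀ i ∈ Finset.range n,
        |(ReluSig.sg (max (ξℕ i) (min x (ξℕ (i+1)))) - ReluSig.sg (ξℕ i))
          - s i * (max (ξℕ i) (min x (ξℕ (i+1))) - ξℕ i)| ≤ δ/4*δ := by
      intro i hi
      rw [Finset.mem_range] at hi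
      have hab : ξℕ i < ξℕ (i+1) := hξmono (Nat.lt_succ_self i)
      have hy1 : ξℕ i ≤ max (ξℕ i) (min x (ξℕ (i+1))) := le_max_left _ _
      have hy2 : max (ξℕ i) (min x (ξℕ (i+1))) ≤ ξℕ (i+1) :=
        max_le (le_of_lt hab) (min_le_right _ _)
      have hs_i : s i = (ReluSig.sg (ξℕ (i+1)) - ReluSig.sg (ξℕ i)) / δ := if_pos hi
      have hsf := ReluSig.seg_fun hab hy1 hy2
      rw [hξstep i] at hsf
      rw [hs_i]
      exact hsf
    have htailx : |ReluSig.sg x - ReluSig.sg T| ≤ ReluSig.sg (-M) := by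
      have hMn : -M ≤ ξℕ n := by linarith
      rcases le_or_gt x (-M) with h | h
      · have hTx : T = -M := by
          rw [hT, hξ0, min_eq_left (le_trans h hMn), max_eq_left h]
        rw [hTx, abs_of_nonpos (by linarith [ReluSig.sg_mono.monotone h] : ReluSig.sg x - ReluSig.sg (-M) ≤ 0)]
        linarith [ReluSig.sg_pos x]
      · rcases le_or_gt x (ξℕ n) with h2 | h2
        · have hTx : T = x := by
            rw [hT, hξ0, min_eq_left h2, max_eq_right (le_of_lt h)]
          rw [hTx, sub_self, abs_zero]
          exact le_of_lt (ReluSig.sg_pos _)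
        · have hTx : T = ξℕ n := by
            rw [hT, hξ0, min_eq_right (le_of_lt h2), max_eq_right hMn]
          rw [hTx, abs_of_nonneg (by linarith [ReluSig.sg_mono h2] : (0:ℝ) ≤ ReluSig.sg x - ReluSig.sg (ξℕ n))]
          have h3 : ReluSig.sg M ≤ ReluSig.sg (ξℕ n) := ReluSig.sg_mono.monotone hξn
          have h4 := ReluSig.sg_lt_one x
          have h5 := ReluSig.sg_neg M
          linarith
    calc |(ReluSig.sg x - ReluSig.sg T) + ∑ i ∈ Finset.range n, _|
        ≤ |ReluSig.sg x - ReluSig.sg T| + |∑ i ∈ Finset.range n, _| := abs_add_le _ _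
      _ ≤ ReluSig.sg (-M) + ∑ i ∈ Finset.range n, (δ/4*δ) := by
          gcongr
          exact le_trans (Finset.abs_sum_le_sum_abs _ _) (Finset.sum_le_sum hterm)
      _ = ReluSig.sg (-M) + n * (δ/4*δ) := by
          rw [Finset.sum_const, Finset.card_range, nsmul_eq_mul]
      _ < ε/2 + ε/2 := by exact add_lt_add htail hsum_small
      _ = ε := by ring
  · -- derivative approximation
    intro x hx
    have hne : ∀ i ≤ n, x ≠ ξℕ i := by
      intro i hi hxi
      exact hx ⟨⟨i, Nat.lt_succ_of_le hi⟩, hxi.symm⟩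
    have hd : ∀ i : Fin (n+1), HasDerivAt (fun t => c i * max 0 (t - ξℕ i))
        (if ξℕ i < x then c i else 0) x :=
      fun i => ReluSig.relu_hasDerivAt (c i) (ξℕ i) x (hne i (Nat.lt_succ_iff.mp i.isLt))
    have hH : HasDerivAt (fun t => ReluSig.sg (-M) + ∑ i : Fin (n+1), c i * max 0 (t - ξℕ i))
        (∑ i : Fin (n+1), if ξℕ i < x then c i else 0) x :=
      (HasDerivAt.fun_sum (fun i _ => hd i)).const_add (ReluSig.sg (-M))
    refine ⟨hH.differentiableAt, ?_⟩
    rw [hH.deriv]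
    have hconv : (∑ i : Fin (n+1), if ξℕ i < x then c i else 0)
        = ∑ i ∈ Finset.range (n+1), (if ξℕ i < x then s i - ReluSig.sprev s i else 0) :=
      Fin.sum_univ_eq_sum_range (fun i => if ξℕ i < x then s i - ReluSig.sprev s i else 0) (n+1)
    rw [hconv]
    rcases ReluSig.locate ξℕ x n hne with hc | hc | ⟨k, hk, h1, h2⟩
    · -- x below all nodes
      rw [Finset.sum_eq_zero (fun i _ => if_neg (by
          push_neg
          exact le_of_lt (lt_of_lt_of_le hc (hξmono.monotone (Nat.zero_le i)))))]
      rw [sub_zero, abs_of_pos (ReluSig.sg_deriv_pos x)]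
      rw [hξ0] at hc
      have := ReluSig.sg_deriv_le_self x
      have := ReluSig.sg_mono hc
      linarith
    · -- x above all nodes
      rw [Finset.sum_congr rfl (fun i hi => if_pos (by
          rw [Finset.mem_range, Nat.lt_succ_iff] at hi
          exact lt_of_le_of_lt (hξmono.monotone hi) hc))]
      rw [ReluSig.tele s n, hsn, sub_zero, abs_of_pos (ReluSig.sg_deriv_pos x)]
      have h3 := ReluSig.sg_deriv_le_one_sub x
      have h4 : ReluSig.sg M ≤ ReluSig.sg (ξℕ n) := ReluSig.sg_mono.monotone hξn
      have h5 := ReluSig.sg_mono hc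
      have h6 := ReluSig.sg_neg M
      linarith
    · -- x in the interior of segment k
      have hsum : (∑ i ∈ Finset.range (n+1), (if ξℕ i < x then s i - ReluSig.sprev s i else 0))
          = s k := by
        rw [← ReluSig.tele s k]
        rw [← Finset.sum_subset (Finset.range_subset_range.2 (by omega : k+1 ≤ n+1))
          (fun i _ hi => if_neg (by
            rw [Finset.mem_range, Nat.lt_succ_iff, not_le] at hi
            push_neg
            exact le_of_lt (lt_of_lt_of_le h2 (hξmono.monotone hi))))]
        exact Finset.sum_congr rfl (fun i hi => if_pos (by
          rw [Finset.mem_range, Nat.lt_succ_iff] at hi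
          exact lt_of_le_of_lt (hξmono.monotone hi) h1))
      rw [hsum]
      have hab : ξℕ k < ξℕ (k+1) := hξmono (Nat.lt_succ_self k)
      have hs_k : s k = (ReluSig.sg (ξℕ (k+1)) - ReluSig.sg (ξℕ k)) / δ := if_pos hk
      have hsd := ReluSig.seg_deriv hab (le_of_lt h1) (le_of_lt h2)
      rw [hξstep k] at hsd
      rw [hs_k]
      calc |deriv ReluSig.sg x - (ReluSig.sg (ξℕ (k+1)) - ReluSig.sg (ξℕ k)) / δ| ≤ δ/4 := hsd
        _ < ε := by linarith
end
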